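/- For every α ∈ ℂ one has the identity of polynomials S̃_α⁰ x₂ = (α/2)(α − α_{1,2})(α − α_{2,1})(4 x₂ y₂ − 1) in R. -/

import Mathlib

open MvPolynomial

noncomputable section

/-- The polynomial ring `ℂ[(x_n), (y_n)]`: `Sum.inl n ↦ x_n`, `Sum.inr n ↦ y_n`. -/
abbrev FockRing : Type := MvPolynomial (ℕ ⊕ ℕ) ℂ

/-- Heisenberg operators `A_n`. -/
def Aop : ℤ → FockRing → FockRing := fun n p =>
  if 0 < n then (Complex.I / 2) • pderiv (Sum.inl n.toNat) p
  else if n < 0 then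
    (Complex.I / 2) •
      (pderiv (Sum.inr (-n).toNat) p -
        ((2 * (-n) : ℤ) : ℂ) • (X (Sum.inl (-n).toNat) * p))
  else 0

/-- Heisenberg operators `Ã_n`. -/
def Atop : ℤ → FockRing → FockRing := fun n p =>
  if 0 < n then (Complex.I / 2) • pderiv (Sum.inr n.toNat) p
  else if n < 0 then
    (Complex.I / 2) •
      (pderiv (Sum.inl (-n).toNat) p -
        ((2 * (-n) : ℤ) : ℂ) • (X (Sum.inr (-n).toNat) * p))
  else 0

/-- Sugawara operator `L_{-n}^{0,α}` for `n ≥ 1`. -/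
def Lop (γ : ℝ) (α : ℂ) (n : ℕ) (p : FockRing) : FockRing :=
  (Complex.I * (α + ((n : ℂ) - 1) * ((γ : ℂ) / 2 + 2 / (γ : ℂ)))) • Aop (-(n : ℤ)) p +
    ∑ᶠ m ∈ {m : ℤ | m ≠ 0 ∧ m ≠ -(n : ℤ)}, Aop (-(n : ℤ) - m) (Aop m p)

/-- Sugawara operator `L̃_{-n}^{0,α}` for `n ≥ 1`. -/
def Ltop (γ : ℝ) (α : ℂ) (n : ℕ) (p : FockRing) : FockRing :=
  (Complex.I * (α + ((n : ℂ) - 1) * ((γ : ℂ) / 2 + 2 / (γ : ℂ)))) • Atop (-(n : ℤ)) p +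
    ∑ᶠ m ∈ {m : ℤ | m ≠ 0 ∧ m ≠ -(n : ℤ)}, Atop (-(n : ℤ) - m) (Atop m p)

/-- `S_α⁰ = α² L_{-2}^{0,α} + (L_{-1}^{0,α})²`. -/
def Sop (γ : ℝ) (α : ℂ) (p : FockRing) : FockRing :=
  α ^ 2 • Lop γ α 2 p + Lop γ α 1 (Lop γ α 1 p)

/-- `S̃_α⁰ = α² L̃_{-2}^{0,α} + (L̃_{-1}^{0,α})²`. -/
def Stop (γ : ℝ) (α : ℂ) (p : FockRing) : FockRing :=
  α ^ 2 • Ltop γ α 2 p + Ltop γ α 1 (Ltop γ α 1 p)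

end

noncomputable section

lemma Atop_zero' (n : ℤ) : Atop n 0 = 0 := by
  unfold Atop; split_ifs <;> simp

lemma Atop_coe (k : ℕ) (hk : 0 < k) (p : FockRing) :
    Atop (k : ℤ) p = (Complex.I / 2) • pderiv (Sum.inr k) p := by
  have : (0:ℤ) < k := by exact_mod_cast hk
  simp [Atop, this, hk.ne', (by omega : ¬ (k:ℤ) < 0)]

lemma Atop_neg_coe (k : ℕ) (hk : 0 < k) (p : FockRing) :
    Atop (-(k : ℤ)) p = (Complex.I / 2) •
      (pderiv (Sum.inl k) p - ((2 * k : ℂ)) • (X (Sum.inr k) * p)) := by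
  have h1 : ¬ (0:ℤ) < -(k:ℤ) := by omega
  have h2 : (-(k:ℤ)) < 0 := by omega
  simp [Atop, h1, h2, hk, (by omega : ¬ (k:ℤ) < 0)]

lemma my_finsum_eq {M : Type*} [AddCommMonoid M] (f : ℤ → M) (s : Set ℤ) (t : Finset ℤ)
    (h₁ : ∀ m ∈ t, m ∈ s) (h₂ : ∀ m ∈ s, m ∉ t → f m = 0) :
    (∑ᶠ m ∈ s, f m) = ∑ m ∈ t, f m := by
  apply finsum_mem_eq_sum_of_inter_support_eq
  ext m
  simp only [Set.mem_inter_iff, Function.mem_support, Finset.coe_sort_coe, Finset.mem_coe]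
  exact ⟨fun ⟨hms, hf⟩ => ⟨by_contra fun h => hf (h₂ m hms h), hf⟩,
    fun ⟨hmt, hf⟩ => ⟨h₁ m hmt, hf⟩⟩

lemma hA1 : Atop (-((1:ℕ):ℤ)) (X (Sum.inl 2)) =
    (-Complex.I) • (X (Sum.inr 1) * X (Sum.inl 2)) := by
  rw [Atop_neg_coe 1 one_pos, pderiv_X_of_ne (by simp)]
  match_scalars <;> ring

lemma hA2 : Atop (-((2:ℕ):ℤ)) (X (Sum.inl 2)) =
    (Complex.I/2) • (1 : FockRing) + (-2*Complex.I) • (X (Sum.inr 2) * X (Sum.inl 2)) := by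
  rw [Atop_neg_coe 2 two_pos, pderiv_X_self]
  match_scalars <;> ring

lemma hB (c : ℂ) : Atop (-((1:ℕ):ℤ)) (c • (X (Sum.inr 1) * X (Sum.inl 2))) =
    (-Complex.I*c) • (X (Sum.inr 1) * (X (Sum.inr 1) * X (Sum.inl 2))) := by
  rw [Atop_neg_coe 1 one_pos]
  have h : pderiv (Sum.inl 1) (X (Sum.inr 1) * X (Sum.inl 2) : FockRing) = 0 := by
    simp [pderiv_mul, pderiv_X_of_ne]
  rw [Derivation.map_smul, h, mul_smul_comm]
  match_scalars <;> ring

lemma hCpos (c : ℂ) : Atop ((1:ℕ):ℤ) (c • (X (Sum.inr 1) * X (Sum.inl 2))) =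
    (Complex.I*c/2) • X (Sum.inl 2) := by
  rw [Atop_coe 1 one_pos, Derivation.map_smul]
  have h : pderiv (Sum.inr 1) (X (Sum.inr 1) * X (Sum.inl 2) : FockRing) = X (Sum.inl 2) := by
    simp [pderiv_mul, pderiv_X_of_ne]
  rw [h]
  match_scalars <;> ring

lemma hC2 (c : ℂ) : Atop (-((2:ℕ):ℤ)) (c • X (Sum.inl 2)) =
    (Complex.I*c/2) • (1 : FockRing) + (-2*Complex.I*c) • (X (Sum.inr 2) * X (Sum.inl 2)) := by
  rw [Atop_neg_coe 2 two_pos, Derivation.map_smul, pderiv_X_self, mul_smul_comm]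
  match_scalars <;> ring

lemma hC3 (c : ℂ) : Atop (-((2:ℕ):ℤ)) (c • (X (Sum.inr 1) * X (Sum.inl 2))) =
    (Complex.I*c/2) • X (Sum.inr 1) +
      (-2*Complex.I*c) • (X (Sum.inr 2) * (X (Sum.inr 1) * X (Sum.inl 2))) := by
  rw [Atop_neg_coe 2 two_pos, Derivation.map_smul]
  have h : pderiv (Sum.inl 2) (X (Sum.inr 1) * X (Sum.inl 2) : FockRing) = X (Sum.inr 1) := by
    simp [pderiv_mul, pderiv_X_of_ne]
  rw [h, mul_smul_comm]
  match_scalars <;> ring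

lemma hC4 (c d : ℂ) : Atop ((1:ℕ):ℤ)
    (c • X (Sum.inr 1) + d • (X (Sum.inr 2) * (X (Sum.inr 1) * X (Sum.inl 2)))) =
    (Complex.I*c/2) • (1 : FockRing) + (Complex.I*d/2) • (X (Sum.inr 2) * X (Sum.inl 2)) := by
  rw [Atop_coe 1 one_pos, map_add, Derivation.map_smul, Derivation.map_smul, pderiv_X_self]
  have h : pderiv (Sum.inr 1) (X (Sum.inr 2) * (X (Sum.inr 1) * X (Sum.inl 2)) : FockRing) =
      X (Sum.inr 2) * X (Sum.inl 2) := by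
    simp [pderiv_mul, pderiv_X_of_ne]
  rw [h]
  match_scalars <;> ring

lemma L1 (γ : ℝ) (α : ℂ) :
    Ltop γ α 1 (X (Sum.inl 2)) = α • (X (Sum.inr 1) * X (Sum.inl 2)) := by
  unfold Ltop
  rw [my_finsum_eq _ _ ∅ (by simp) ?_]
  · rw [Finset.sum_empty, add_zero, hA1]
    match_scalars
    ring_nf
    simp [Complex.I_sq]
  · rintro m ⟨hm0, hm1⟩ -
    obtain ⟨k, rfl | rfl⟩ := Int.eq_nat_or_neg m
    · have hk : 0 < k := by omega
      rw [Atop_coe k hk, pderiv_X_of_ne (by simp), smul_zero, Atop_zero']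
    · have hk : 0 < k := by omega
      have hk1 : k ≠ 1 := by omega
      rw [Atop_neg_coe k hk]
      have he : (-((1:ℕ):ℤ) - -(k:ℤ)) = ((k-1 : ℕ) : ℤ) := by push_cast [Nat.cast_sub hk]; ring
      rw [he, Atop_coe (k-1) (by omega)]
      have h1 : Sum.inl 2 ≠ (Sum.inr (k-1) : ℕ ⊕ ℕ) := by simp
      have h2 : Sum.inr k ≠ (Sum.inr (k-1) : ℕ ⊕ ℕ) := by simp; omega
      simp [pderiv_X_of_ne, h1, h2, pderiv_mul, Pi.single_apply]
      split_ifs <;> simp [pderiv_one]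

lemma L2 (γ : ℝ) (α : ℂ) :
    Ltop γ α 2 (X (Sum.inl 2)) =
      (-(α + ((γ:ℂ)/2 + 2/(γ:ℂ)))/2) • (1 : FockRing) +
      (2*(α + ((γ:ℂ)/2 + 2/(γ:ℂ)))) • (X (Sum.inr 2) * X (Sum.inl 2)) +
      (-1 : ℂ) • (X (Sum.inr 1) * (X (Sum.inr 1) * X (Sum.inl 2))) := by
  unfold Ltop
  rw [my_finsum_eq _ _ {-1} (by norm_num) ?_]
  · rw [Finset.sum_singleton, hA2,
      show ((-1:ℤ)) = -((1:ℕ):ℤ) by norm_num,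
      show (-((2:ℕ):ℤ) - -((1:ℕ):ℤ)) = -((1:ℕ):ℤ) by norm_num,
      hA1, hB]
    match_scalars <;> ring_nf <;> simp [Complex.I_sq] <;> ring_nf
  · rintro m ⟨hm0, hm2⟩ hmt
    simp only [Finset.mem_singleton] at hmt
    obtain ⟨k, rfl | rfl⟩ := Int.eq_nat_or_neg m
    · have hk : 0 < k := by omega
      rw [Atop_coe k hk, pderiv_X_of_ne (by simp), smul_zero, Atop_zero']
    · have hk : 0 < k := by omega
      have hk1 : k ≠ 1 := by omega
      have hk2 : k ≠ 2 := by omega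
      rw [Atop_neg_coe k hk]
      have he : (-((2:ℕ):ℤ) - -(k:ℤ)) = ((k-2 : ℕ) : ℤ) := by
        push_cast [Nat.cast_sub (by omega : 2 ≤ k)]; ring
      rw [he, Atop_coe (k-2) (by omega)]
      have h1 : Sum.inl 2 ≠ (Sum.inr (k-2) : ℕ ⊕ ℕ) := by simp
      have h2 : Sum.inr k ≠ (Sum.inr (k-2) : ℕ ⊕ ℕ) := by simp; omega
      simp [pderiv_X_of_ne, h1, h2, pderiv_mul, Pi.single_apply]
      split_ifs <;> simp [pderiv_one]

lemma L1L1 (γ : ℝ) (α : ℂ) :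
    Ltop γ α 1 (α • (X (Sum.inr 1) * X (Sum.inl 2))) =
      (α^2) • (X (Sum.inr 1) * (X (Sum.inr 1) * X (Sum.inl 2))) +
      (-(α/2)) • (1 : FockRing) + (2*α) • (X (Sum.inr 2) * X (Sum.inl 2)) := by
  unfold Ltop
  rw [my_finsum_eq _ _ {1, -2} (by norm_num) ?_]
  · rw [Finset.sum_insert (by norm_num), Finset.sum_singleton, hB,
      show ((1:ℤ)) = ((1:ℕ):ℤ) by norm_num, hCpos,
      show (-((1:ℕ):ℤ) - ((1:ℕ):ℤ)) = -((2:ℕ):ℤ) by norm_num, hC2,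
      show ((-2:ℤ)) = -((2:ℕ):ℤ) by norm_num, hC3,
      show (-((1:ℕ):ℤ) - -((2:ℕ):ℤ)) = ((1:ℕ):ℤ) by norm_num, hC4]
    match_scalars <;> ring_nf <;> simp [Complex.I_sq] <;> ring_nf
  · rintro m ⟨hm0, hm1⟩ hmt
    simp only [Finset.mem_insert, Finset.mem_singleton] at hmt
    push_neg at hmt
    obtain ⟨hne1, hne2⟩ := hmt
    obtain ⟨k, rfl | rfl⟩ := Int.eq_nat_or_neg m
    · have hk : 0 < k := by omega
      have hk1 : k ≠ 1 := by omega
      rw [Atop_coe k hk, Derivation.map_smul]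
      have h : pderiv (Sum.inr k) (X (Sum.inr 1) * X (Sum.inl 2) : FockRing) = 0 := by
        have e1 : Sum.inr 1 ≠ (Sum.inr k : ℕ ⊕ ℕ) := by simp; omega
        simp [pderiv_mul, pderiv_X_of_ne, e1]
      rw [h, smul_zero, smul_zero, Atop_zero']
    · have hk : 0 < k := by omega
      have hk1 : k ≠ 1 := by omega
      have hk2 : k ≠ 2 := by omega
      rw [Atop_neg_coe k hk, Derivation.map_smul]
      have h : pderiv (Sum.inl k) (X (Sum.inr 1) * X (Sum.inl 2) : FockRing) = 0 := by
        have e1 : Sum.inl 2 ≠ (Sum.inl k : ℕ ⊕ ℕ) := by simp; omega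
        simp [pderiv_mul, pderiv_X_of_ne, e1]
      rw [h, smul_zero]
      have he : (-((1:ℕ):ℤ) - -(k:ℤ)) = ((k-1 : ℕ) : ℤ) := by push_cast [Nat.cast_sub hk]; ring
      rw [he, Atop_coe (k-1) (by omega)]
      have h1 : Sum.inl 2 ≠ (Sum.inr (k-1) : ℕ ⊕ ℕ) := by simp
      have h2 : Sum.inr k ≠ (Sum.inr (k-1) : ℕ ⊕ ℕ) := by simp; omega
      have h3 : Sum.inr 1 ≠ (Sum.inr (k-1) : ℕ ⊕ ℕ) := by simp; omega
      simp [pderiv_mul, pderiv_X_of_ne, h1, h2, h3]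

end

theorem stmt13 (γ : ℝ) (hγ0 : 0 < γ) (hγ2 : γ < 2) (α : ℂ) :
    Stop γ α (X (Sum.inl 2)) =
      C (α / 2 * (α - (-2 / (γ : ℂ))) * (α - (-(γ : ℂ) / 2))) *
        (4 * X (Sum.inl 2) * X (Sum.inr 2) - 1) := by
  have hγ : (γ : ℂ) ≠ 0 := by
    exact_mod_cast (Complex.ofReal_ne_zero).2 hγ0.ne'
  unfold Stop
  have hre : (4 * X (Sum.inl 2) * X (Sum.inr 2) - 1 : FockRing)
      = (4:ℂ) • (X (Sum.inr 2) * X (Sum.inl 2)) + (-1:ℂ) • (1:FockRing) := by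
    simp [smul_eq_C_mul, map_ofNat]
    ring
  rw [L1, L1L1, L2, ← smul_eq_C_mul, hre]
  match_scalars <;> field_simp <;> ring
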